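/- Let I be an ideal of ℝ[x₁,…,xₙ] and let p, g ∈ ℝ[x₁,…,xₙ]. Assume: (i) for every real ε > 0, both p + ε and −p + ε can be written as σ + q with σ a sum of squares and q ∈ I; and (ii) there exists a real N > 0 such that N − (g² + 1) can be written as σ + q with σ a sum of squares and q ∈ I. Then for every real ε > 0, the polynomial p·g + ε can be written as σ + q with σ a sum of squares and q ∈ I. -/

import Mathlib

/-- A polynomial is a sum of squares. -/
def IsSOS {n : ℕ} (σ : MvPolynomial (Fin n) ℝ) : Prop :=
  ∃ (t : ℕ) (s : Fin t → MvPolynomial (Fin n) ℝ), σ = ∑ i, (s i) ^ 2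

lemma IsSOS.add {n : ℕ} {a b : MvPolynomial (Fin n) ℝ} (ha : IsSOS a) (hb : IsSOS b) :
    IsSOS (a + b) := by
  obtain ⟨t, s, rfl⟩ := ha
  obtain ⟨u, r, rfl⟩ := hb
  refine ⟨t + u, Fin.addCases s r, ?_⟩
  rw [Fin.sum_univ_add]
  simp

lemma IsSOS.mul {n : ℕ} {a b : MvPolynomial (Fin n) ℝ} (ha : IsSOS a) (hb : IsSOS b) :
    IsSOS (a * b) := by
  obtain ⟨t, s, rfl⟩ := ha
  obtain ⟨u, r, rfl⟩ := hb
  refine ⟨t * u, fun k => s (finProdFinEquiv.symm k).1 * r (finProdFinEquiv.symm k).2, ?_⟩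
  rw [Finset.sum_mul_sum, ← Equiv.sum_comp finProdFinEquiv
    (fun k => (s (finProdFinEquiv.symm k).1 * r (finProdFinEquiv.symm k).2) ^ 2)]
  simp [← Finset.sum_product', Finset.univ_product_univ, mul_pow]

lemma IsSOS.sq {n : ℕ} (a : MvPolynomial (Fin n) ℝ) : IsSOS (a ^ 2) :=
  ⟨1, fun _ => a, by simp⟩

lemma IsSOS.C {n : ℕ} {c : ℝ} (hc : 0 ≤ c) : IsSOS (MvPolynomial.C (σ := Fin n) c) :=
  ⟨1, fun _ => MvPolynomial.C (Real.sqrt c), by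
    simp [← map_pow, Real.sq_sqrt hc]⟩

theorem statement3 (n : ℕ) (I : Ideal (MvPolynomial (Fin n) ℝ))
    (p g : MvPolynomial (Fin n) ℝ)
    (hp : ∀ ε : ℝ, 0 < ε →
      (∃ σ q, IsSOS σ ∧ q ∈ I ∧ p + MvPolynomial.C ε = σ + q) ∧
      (∃ σ q, IsSOS σ ∧ q ∈ I ∧ -p + MvPolynomial.C ε = σ + q))
    (hg : ∃ N : ℝ, 0 < N ∧
      ∃ σ q, IsSOS σ ∧ q ∈ I ∧ MvPolynomial.C N - (g ^ 2 + 1) = σ + q) :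
    ∀ ε : ℝ, 0 < ε →
      ∃ σ q, IsSOS σ ∧ q ∈ I ∧ p * g + MvPolynomial.C ε = σ + q := by
  obtain ⟨N, hN, σ₃, q₃, hσ₃, hq₃, h₃⟩ := hg
  intro ε hε
  set ε₁ : ℝ := 2 * ε / (3 * N) with hε₁def
  have hε₁ : 0 < ε₁ := by positivity
  obtain ⟨⟨σ₁, q₁, hσ₁, hq₁, h₁⟩, ⟨σ₂, q₂, hσ₂, hq₂, h₂⟩⟩ := hp ε₁ hε₁
  refine ⟨MvPolynomial.C (1/2 : ℝ) * (σ₁ * (g + 1) ^ 2 + σ₂ * (g ^ 2 + 1)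
      + MvPolynomial.C ε₁ * (g - 1) ^ 2 + MvPolynomial.C (3 * ε₁) * σ₃),
    MvPolynomial.C (1/2 : ℝ) * (q₁ * (g + 1) ^ 2 + q₂ * (g ^ 2 + 1)
      + MvPolynomial.C (3 * ε₁) * q₃), ?_, ?_, ?_⟩
  · refine (IsSOS.C (by norm_num)).mul ?_
    refine (((hσ₁.mul (IsSOS.sq _)).add (hσ₂.mul ?_)).add
      ((IsSOS.C hε₁.le).mul (IsSOS.sq _))).add ((IsSOS.C (by positivity)).mul hσ₃)
    exact (IsSOS.sq g).add (IsSOS.C zero_le_one)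
  · exact Ideal.mul_mem_left _ _ (I.add_mem (I.add_mem
      (Ideal.mul_mem_right _ _ hq₁) (Ideal.mul_mem_right _ _ hq₂))
      (Ideal.mul_mem_left _ _ hq₃))
  · have hC : (MvPolynomial.C ε : MvPolynomial (Fin n) ℝ)
        = MvPolynomial.C (1/2 : ℝ) * (MvPolynomial.C (3 * ε₁) * MvPolynomial.C N) := by
      rw [← map_mul, ← map_mul]
      congr 1
      field_simp [hε₁def]
      rw [hε₁def, mul_div_assoc', div_mul_eq_mul_div, eq_div_iff (mul_ne_zero three_ne_zero hN.ne')]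
      ring
    have h3 : (MvPolynomial.C (3 * ε₁) : MvPolynomial (Fin n) ℝ)
        = 3 * MvPolynomial.C ε₁ := by
      rw [map_mul, map_ofNat]
    have hhalf : (MvPolynomial.C (1/2 : ℝ) : MvPolynomial (Fin n) ℝ) * 2 = 1 := by
      rw [show (2 : MvPolynomial (Fin n) ℝ) = MvPolynomial.C 2 from (map_ofNat _ 2).symm,
        ← map_mul]
      norm_num
    linear_combination (-(p * g)) * hhalf
      + MvPolynomial.C (1/2 : ℝ) * (g ^ 2 + 1) * h3 + hC + MvPolynomial.C (1/2 : ℝ) * (g + 1) ^ 2 * h₁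
      + MvPolynomial.C (1/2 : ℝ) * (g ^ 2 + 1) * h₂
      + MvPolynomial.C (1/2 : ℝ) * MvPolynomial.C (3 * ε₁) * h₃
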